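/- Let a locally compact abelian group G act via α on a set X carrying a G-invariant uniformity 𝒰, and let 𝒰_mix be the mixed uniformity (the collection of all V ⊆ X × X containing some V[O,U] = {(α(t,x), y) : t ∈ O, (x,y) ∈ U} with U ∈ 𝒰 and O ⊆ G an open set containing 0). Then: (a) the action α is equicontinuous on (X, 𝒰_mix) and 𝒰_mix ⊆ 𝒰; (b) if 𝒰' is any uniformity on X with 𝒰' ⊆ 𝒰 such that α is equicontinuous on (X, 𝒰'), then 𝒰' ⊆ 𝒰_mix. In particular, α is equicontinuous on (X, 𝒰) if and only if 𝒰 = 𝒰_mix. -/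

import Mathlib

open Uniformity

/-- The basic mixed entourage `V[O,U] = {(α t x, y) : t ∈ O, (x,y) ∈ U}`. -/
def mixEnt {G X : Type*} (α : G → X → X) (O : Set G) (U : Set (X × X)) : Set (X × X) :=
  {p : X × X | ∃ t ∈ O, ∃ q ∈ U, p.1 = α t q.1 ∧ p.2 = q.2}

/-- The mixed uniformity `𝒰_mix`: all supersets of some `V[O,U]` with `U ∈ 𝒰` and `O` an open
set containing `0`. -/
def mixUniformity {G X : Type*} [AddCommGroup G] [TopologicalSpace G] [UniformSpace X]
    (α : G → X → X) : Set (Set (X × X)) :=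
  {V : Set (X × X) | ∃ U ∈ 𝓤 X, ∃ O : Set G, IsOpen O ∧ (0 : G) ∈ O ∧ mixEnt α O U ⊆ V}

/-- The action `α` is equicontinuous with respect to a collection `𝒱` of entourages. -/
def equiOn {G X : Type*} [AddCommGroup G] [TopologicalSpace G]
    (α : G → X → X) (𝒱 : Set (Set (X × X))) : Prop :=
  ∀ V ∈ 𝒱, ∃ O : Set G, IsOpen O ∧ (0 : G) ∈ O ∧ ∀ s ∈ O, ∀ x : X, (α s x, x) ∈ V

/-- A collection of subsets of `X × X` is a uniformity on `X`. -/
def isUniformityOn {X : Type*} (𝒱 : Set (Set (X × X))) : Prop :=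
  𝒱.Nonempty
  ∧ (∀ V ∈ 𝒱, ∀ x : X, (x, x) ∈ V)
  ∧ (∀ V ∈ 𝒱, ∀ W : Set (X × X), V ⊆ W → W ∈ 𝒱)
  ∧ (∀ V ∈ 𝒱, ∀ V' ∈ 𝒱, V ∩ V' ∈ 𝒱)
  ∧ (∀ V ∈ 𝒱, ∃ W ∈ 𝒱, {p : X × X | ∃ z : X, (p.1, z) ∈ W ∧ (z, p.2) ∈ W} ⊆ V)
  ∧ (∀ V ∈ 𝒱, {p : X × X | (p.2, p.1) ∈ V} ∈ 𝒱)

/-- Characterization of the mixed uniformity: (a) `α` is equicontinuous on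
`(X, 𝒰_mix)` and `𝒰_mix ⊆ 𝒰`; (b) `𝒰_mix` is the finest such uniformity; in particular `α`
is equicontinuous on `(X, 𝒰)` iff `𝒰 = 𝒰_mix`. -/
theorem stmt11 {G X : Type*}
    [AddCommGroup G] [TopologicalSpace G] [IsTopologicalAddGroup G]
    [LocallyCompactSpace G] [T2Space G]
    [UniformSpace X]
    (α : G → X → X)
    (hzero : ∀ x, α 0 x = x)
    (hadd : ∀ s t x, α s (α t x) = α (s + t) x)
    (hinv : ∀ U ∈ 𝓤 X, ∃ U' ∈ 𝓤 X, ∀ (t : G), ∀ p : X × X, p ∈ U' →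
      (α t p.1, α t p.2) ∈ U) :
    -- (a)
    (equiOn α (mixUniformity α) ∧ mixUniformity α ⊆ (𝓤 X).sets)
    -- (b)
    ∧ (∀ 𝒰' : Set (Set (X × X)), isUniformityOn 𝒰' → 𝒰' ⊆ (𝓤 X).sets →
        equiOn α 𝒰' → 𝒰' ⊆ mixUniformity α)
    -- in particular
    ∧ (equiOn α (𝓤 X).sets ↔ (𝓤 X).sets = mixUniformity α) := by

  have ha1 : equiOn α (mixUniformity α) := by
    rintro V ⟨U, hU, O, hO, h0, hsub⟩
    exact ⟨O, hO, h0, fun s hs x => hsub ⟨s, hs, (x, x), refl_mem_uniformity hU, rfl, rfl⟩⟩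
  have ha2 : mixUniformity α ⊆ (𝓤 X).sets := by
    rintro V ⟨U, hU, O, hO, h0, hsub⟩
    exact Filter.mem_of_superset hU fun p hp => hsub ⟨0, h0, p, hp, (hzero p.1).symm, rfl⟩
  have hb : ∀ 𝒰' : Set (Set (X × X)), isUniformityOn 𝒰' → 𝒰' ⊆ (𝓤 X).sets →
      equiOn α 𝒰' → 𝒰' ⊆ mixUniformity α := by
    intro 𝒰' hU' hsub heq V hV
    obtain ⟨-, -, -, -, hcomp, -⟩ := hU'
    obtain ⟨W, hW, hWV⟩ := hcomp V hV
    obtain ⟨O, hO, h0, hOeq⟩ := heq W hW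
    refine ⟨W, hsub hW, O, hO, h0, ?_⟩
    rintro ⟨a, b⟩ ⟨t, ht, ⟨x, y⟩, hxy, h1, h2⟩
    simp only at h1 h2
    subst h1; subst h2
    exact hWV ⟨x, hOeq t ht x, hxy⟩
  have hunif : isUniformityOn (𝓤 X).sets := by
    refine ⟨⟨Set.univ, Filter.univ_mem⟩, fun V hV x => refl_mem_uniformity hV,
      fun V hV W hVW => Filter.mem_of_superset hV hVW,
      fun V hV V' hV' => Filter.inter_mem hV hV', ?_, ?_⟩
    · intro V hV
      obtain ⟨W, hW, hWV⟩ := comp_mem_uniformity_sets hV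
      exact ⟨W, hW, fun p hp => hWV hp⟩
    · intro V hV
      exact tendsto_swap_uniformity hV
  refine ⟨⟨ha1, ha2⟩, hb, ?_, ?_⟩
  · intro h
    exact Set.Subset.antisymm (hb _ hunif subset_rfl h) ha2
  · intro h
    rw [h]; exact ha1
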